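/- Let G be an ordered abelian group with K-powers, let g₁, …, gℓ ∈ G with each gᵢ < 1, and let F be a generalized power series in ℓ variables with coefficients in ℝ and exponents in K≥0, whose support is contained in a product of ℓ well-ordered subsets of [0,∞). Then for each g ∈ G, the set of exponent tuples r = (r₁,…,rℓ) in the support of F with g₁^{r₁} ⋯ gℓ^{rℓ} = g is finite, and the resulting family of monomials g₁^{r₁}⋯gℓ^{rℓ} (r ∈ Supp F) has reverse well-ordered image in G; hence substitution F(g₁,…,gℓ) defines an element of the Hahn series field ℝ((G)). -/

import Mathlib

open OrderDual

theorem aux_pi_isPWO {ι α : Type*} [Finite ι] [LinearOrder α] (s : ι → Set α)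
    (hs : ∀ i, (s i).IsPWO) : {f : ι → α | ∀ i, f i ∈ s i}.IsPWO := by
  cases nonempty_fintype ι
  suffices H : ∀ (t : Finset ι) (f : ℕ → ι → α), (∀ n i, f n i ∈ s i) →
      ∃ g : ℕ ↪o ℕ, ∀ ⦃a b : ℕ⦄, a ≤ b → ∀ x ∈ t, f (g a) x ≤ f (g b) x by
    refine Set.isPWO_iff_exists_monotone_subseq.2 fun f hf => ?_
    obtain ⟨g, hg⟩ := H Finset.univ f (fun n i => hf n i)
    exact ⟨g, fun a b hab i => hg hab i (Finset.mem_univ i)⟩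
  intro t
  induction t using Finset.cons_induction with
  | empty => intro f hf; exact ⟨RelEmbedding.refl (· ≤ ·), by simp⟩
  | cons x t hx ih =>
    intro f hf
    obtain ⟨g, hg⟩ := (hs x).exists_monotone_subseq (f := fun n => f n x) (fun n => hf n x)
    obtain ⟨g', hg'⟩ := ih (f ∘ g) (fun n i => hf _ i)
    refine ⟨g'.trans g, fun a b hab => ?_⟩
    rw [Finset.forall_mem_cons]
    exact ⟨hg (OrderHomClass.mono g' hab), fun y hy => hg' hab y hy⟩

/-- An ordered (multiplicative) abelian group with `K`-powers, where `K` is a subfield of `ℝ`. -/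
structure KPowers (K : Subfield ℝ) (G : Type*) [CommGroup G] [LinearOrder G] [IsOrderedMonoid G] where
  pow : G → K → G
  pow_zero : ∀ g : G, pow g 0 = 1
  pow_one : ∀ g : G, pow g 1 = g
  mul_pow : ∀ (g₁ g₂ : G) (r : K), pow (g₁ * g₂) r = pow g₁ r * pow g₂ r
  pow_le_pow : ∀ (g₁ g₂ : G) (r : K), (0 : ℝ) ≤ (r : ℝ) → g₁ ≤ g₂ → pow g₁ r ≤ pow g₂ r
  pow_add : ∀ (g : G) (r s : K), pow g (r + s) = pow g r * pow g s
  pow_mul : ∀ (g : G) (r s : K), pow (pow g r) s = pow g (r * s)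

/-- Substituting elements `gᵢ < 1` of `G` into a generalized power series `F`
(coefficient function `a`, exponents in `K≥0`, support in a product of well-ordered
subsets of `[0,∞)`): each fibre of the monomial map over `g ∈ G` is finite
(Neumann's lemma), the image set of monomials is reverse well-ordered, and the
substitution defines an element of the Hahn field `ℝ((G))`. -/
theorem stmt2 {K : Subfield ℝ} {G : Type*} [CommGroup G] [LinearOrder G] [IsOrderedMonoid G]
    (P : KPowers K G) (ℓ : ℕ) (gs : Fin ℓ → G) (hgs : ∀ i, gs i < 1)
    (a : (Fin ℓ → K) → ℝ) (S : Fin ℓ → Set ℝ)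
    (hSwf : ∀ i, (S i).WellFoundedOn (· < ·))
    (hSnn : ∀ i, S i ⊆ Set.Ici (0 : ℝ))
    (hsupp : ∀ r : Fin ℓ → K, a r ≠ 0 → ∀ i, (r i : ℝ) ∈ S i) :
    (∀ g : G, {r : Fin ℓ → K | a r ≠ 0 ∧ ∏ i, P.pow (gs i) (r i) = g}.Finite) ∧
    {g : G | ∃ r : Fin ℓ → K, a r ≠ 0 ∧ ∏ i, P.pow (gs i) (r i) = g}.WellFoundedOn
      (· > ·) ∧
    ∃ σ : HahnSeries Gᵒᵈ ℝ, ∀ g : G,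
      σ.coeff (toDual g) =
        ∑ᶠ r ∈ {r : Fin ℓ → K | a r ≠ 0 ∧ ∏ i, P.pow (gs i) (r i) = g}, a r := by
  set Φ : (Fin ℓ → K) → G := fun r => ∏ i, P.pow (gs i) (r i) with hΦ
  -- pow of 1 is 1
  have pow_one' : ∀ r : K, P.pow 1 r = 1 := by
    intro r
    have h := P.mul_pow 1 1 r
    rw [one_mul] at h
    exact (mul_left_cancel (a := P.pow 1 r) (by rw [mul_one, ← h])).symm
  have pow_le_one : ∀ (g : G) (r : K), g ≤ 1 → (0 : ℝ) ≤ (r : ℝ) → P.pow g r ≤ 1 := by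
    intro g r hg hr
    calc P.pow g r ≤ P.pow 1 r := P.pow_le_pow g 1 r hr hg
    _ = 1 := pow_one' r
  have pow_lt_one : ∀ (g : G) (r : K), g < 1 → (0 : ℝ) < (r : ℝ) → P.pow g r < 1 := by
    intro g r hg hr
    refine lt_of_le_of_ne (pow_le_one g r hg.le hr.le) ?_
    intro heq
    have hr0 : r ≠ 0 := fun h => by simp [h] at hr
    have : g = 1 := by
      calc g = P.pow g 1 := (P.pow_one g).symm
      _ = P.pow g (r * r⁻¹) := by rw [mul_inv_cancel₀ hr0]
      _ = P.pow (P.pow g r) r⁻¹ := (P.pow_mul g r r⁻¹).symm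
      _ = P.pow 1 r⁻¹ := by rw [heq]
      _ = 1 := pow_one' r⁻¹
    exact absurd this hg.ne
  -- antitone in the exponent
  have anti : ∀ (i : Fin ℓ) (r s : K), (0 : ℝ) ≤ (r : ℝ) → r ≤ s →
      P.pow (gs i) s ≤ P.pow (gs i) r := by
    intro i r s hr hrs
    have h1 : P.pow (gs i) s = P.pow (gs i) r * P.pow (gs i) (s - r) := by
      rw [← P.pow_add]; ring_nf
    rw [h1]
    have h2 : P.pow (gs i) (s - r) ≤ 1 := by
      refine pow_le_one _ _ (hgs i).le ?_
      have hrs' : (r : ℝ) ≤ (s : ℝ) := hrs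
      push_cast; linarith
    calc P.pow (gs i) r * P.pow (gs i) (s - r) ≤ P.pow (gs i) r * 1 :=
      mul_le_mul_right h2 _
    _ = P.pow (gs i) r := mul_one _
  have anti_strict : ∀ (i : Fin ℓ) (r s : K), (0 : ℝ) ≤ (r : ℝ) → r < s →
      P.pow (gs i) s < P.pow (gs i) r := by
    intro i r s hr hrs
    have h1 : P.pow (gs i) s = P.pow (gs i) r * P.pow (gs i) (s - r) := by
      rw [← P.pow_add]; ring_nf
    rw [h1]
    have h2 : P.pow (gs i) (s - r) < 1 := by
      refine pow_lt_one _ _ (hgs i) ?_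
      have hrs' : (r : ℝ) < (s : ℝ) := hrs
      push_cast; linarith
    calc P.pow (gs i) r * P.pow (gs i) (s - r) < P.pow (gs i) r * 1 :=
      mul_lt_mul_right h2 _
    _ = P.pow (gs i) r := mul_one _
  -- the support set T and its PWO property
  set T : Set (Fin ℓ → K) := {r | ∀ i, (r i : ℝ) ∈ S i} with hT
  have hTpwo : T.IsPWO := by
    refine aux_pi_isPWO (fun i => {x : K | (x : ℝ) ∈ S i}) fun i => ?_
    refine Set.partiallyWellOrderedOn_iff_exists_lt.2 ?_
    intro f hf
    obtain ⟨m, n, hmn, hle⟩ := (Set.IsWF.isPWO (hSwf i)).exists_lt (f := fun n => (f n : ℝ)) hf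
    exact ⟨m, n, hmn, by exact_mod_cast hle⟩
  -- nonnegativity of exponents in the support
  have hnn : ∀ r ∈ T, ∀ i, (0 : ℝ) ≤ (r i : ℝ) := fun r hr i => hSnn i (hr i)
  -- strict antitonicity of Φ on T
  have hΦanti : ∀ r ∈ T, ∀ s : Fin ℓ → K, r ≤ s → Φ s ≤ Φ r := by
    intro r hr s hrs
    exact Finset.prod_le_prod' fun i _ => anti i (r i) (s i) (hnn r hr i) (hrs i)
  have hΦstrict : ∀ r ∈ T, ∀ s : Fin ℓ → K, r ≤ s → r ≠ s → Φ s < Φ r := by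
    intro r hr s hrs hne
    have : ∃ i, r i < s i := by
      by_contra h
      push_neg at h
      exact hne (funext fun i => le_antisymm (hrs i) (h i))
    obtain ⟨j, hj⟩ := this
    refine Finset.prod_lt_prod' (f := fun i => P.pow (gs i) (s i)) ?_ ?_
    · exact fun i _ => anti i (r i) (s i) (hnn r hr i) (hrs i)
    · exact ⟨j, Finset.mem_univ j, anti_strict j (r j) (s j) (hnn r hr j) hj⟩
  have hmemT : ∀ r : Fin ℓ → K, a r ≠ 0 → r ∈ T := fun r h i => hsupp r h i
  -- Part 1: fibres are finite
  have part1 : ∀ g : G, {r : Fin ℓ → K | a r ≠ 0 ∧ Φ r = g}.Finite := by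
    intro g
    by_contra h
    have h' : {r : Fin ℓ → K | a r ≠ 0 ∧ Φ r = g}.Infinite := h
    obtain f := h'.natEmbedding
    obtain ⟨m, n, hmn, hle⟩ := hTpwo.exists_lt (f := fun n => (f n : Fin ℓ → K))
      (fun n => hmemT _ (f n).2.1)
    rcases eq_or_ne ((f m : Fin ℓ → K)) (f n : Fin ℓ → K) with heq | hne
    · exact absurd (f.injective (Subtype.ext heq)) hmn.ne
    · have := hΦstrict _ (hmemT _ (f m).2.1) _ hle hne
      rw [(f m).2.2, (f n).2.2] at this
      exact lt_irrefl g this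
  -- Part 2: the image is reverse well-ordered (pwo for ≥, hence wf for >)
  have hIm : ∀ g ∈ {g : G | ∃ r : Fin ℓ → K, a r ≠ 0 ∧ Φ r = g},
      ∃ r : Fin ℓ → K, a r ≠ 0 ∧ Φ r = g := fun g hg => hg
  have part2 : {g : G | ∃ r : Fin ℓ → K, a r ≠ 0 ∧ Φ r = g}.WellFoundedOn (· > ·) := by
    rw [Set.wellFoundedOn_iff_no_descending_seq]
    intro f hf
    choose r hr1 hr2 using fun n => hf n
    obtain ⟨m, n, hmn, hle⟩ := hTpwo.exists_lt (f := r) (fun n => hmemT _ (hr1 n))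
    have hgt : f m < f n := f.map_rel_iff.2 hmn
    rcases eq_or_ne (r m) (r n) with heq | hne
    · rw [← hr2 m, ← hr2 n, heq] at hgt; exact lt_irrefl _ hgt
    · have := hΦstrict _ (hmemT _ (hr1 m)) _ hle hne
      rw [hr2 m, hr2 n] at this
      exact lt_irrefl _ (this.trans hgt)
  -- Part 3: the Hahn series
  refine ⟨part1, part2, ?_⟩
  set c : Gᵒᵈ → ℝ := fun g => ∑ᶠ r ∈ {r : Fin ℓ → K | a r ≠ 0 ∧ Φ r = ofDual g}, a r with hc
  have hcsupp : (Function.support c).IsPWO := by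
    refine Set.partiallyWellOrderedOn_iff_exists_lt.2 ?_
    intro f hf
    have hne : ∀ n, ∃ r : Fin ℓ → K, a r ≠ 0 ∧ Φ r = ofDual (f n) := by
      intro n
      by_contra h
      push_neg at h
      have : {r : Fin ℓ → K | a r ≠ 0 ∧ Φ r = ofDual (f n)} = ∅ := by
        ext r; simp only [Set.mem_setOf_eq, Set.mem_empty_iff_false, iff_false, not_and]
        exact h r
      have : c (f n) = 0 := by rw [hc]; simp [this]
      exact hf n this
    choose r hr1 hr2 using hne
    obtain ⟨m, n, hmn, hle⟩ := hTpwo.exists_lt (f := r) (fun n => hmemT _ (hr1 n))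
    refine ⟨m, n, hmn, ?_⟩
    have : Φ (r n) ≤ Φ (r m) := hΦanti _ (hmemT _ (hr1 m)) _ hle
    rw [hr2 m, hr2 n] at this
    exact this
  exact ⟨⟨c, hcsupp⟩, fun g => rfl⟩
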